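/- Let p ∈ ℂ. There exists a unique dual pairing of Hopf algebras ⟨·,·⟩ : U_p^{(j)}(sl2) × SL_p^{(j)}(2,ℂ) → ℂ whose values on generators are ⟨h,α⟩ = 1, ⟨h,δ⟩ = −1, ⟨h,β⟩ = ⟨h,γ⟩ = 0, ⟨y,γ⟩ = 1, ⟨y,α⟩ = ⟨y,β⟩ = ⟨y,δ⟩ = 0, ⟨t,α⟩ = 1, ⟨t,β⟩ = p, ⟨t,γ⟩ = 0, ⟨t,δ⟩ = 1, ⟨t⁻¹,α⟩ = 1, ⟨t⁻¹,β⟩ = −p, ⟨t⁻¹,γ⟩ = 0, ⟨t⁻¹,δ⟩ = 1. -/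

import Mathlib

noncomputable section

open FreeAlgebra
open scoped TensorProduct

/-- The relations of the Jordanian quantum enveloping algebra `U_p^{(j)}(sl2)`, with
generators `h = ι ℂ 0`, `y = ι ℂ 1`, `t = ι ℂ 2`, `t⁻¹ = ι ℂ 3`. -/
inductive UjRel (p : ℂ) : FreeAlgebra ℂ (Fin 4) → FreeAlgebra ℂ (Fin 4) → Prop
  | tti : UjRel p (ι ℂ 2 * ι ℂ 3) 1
  | tit : UjRel p (ι ℂ 3 * ι ℂ 2) 1
  | ht : UjRel p (ι ℂ 0 * ι ℂ 2 - ι ℂ 2 * ι ℂ 0) (ι ℂ 2 * ι ℂ 2 - 1)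
  | yt : UjRel p (ι ℂ 1 * ι ℂ 2 - ι ℂ 2 * ι ℂ 1)
      ((-(p / 2)) • (ι ℂ 0 * ι ℂ 2 + ι ℂ 2 * ι ℂ 0))
  | hy : UjRel p (ι ℂ 0 * ι ℂ 1 - ι ℂ 1 * ι ℂ 0)
      ((-(1 / 2 : ℂ)) • (ι ℂ 1 * ι ℂ 2 + ι ℂ 2 * ι ℂ 1 + ι ℂ 1 * ι ℂ 3 + ι ℂ 3 * ι ℂ 1))

/-- The Jordanian quantum enveloping algebra `U_p^{(j)}(sl2)`. -/
abbrev Uj (p : ℂ) := RingQuot (UjRel p)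

/-- The images of the generators `h, y, t, t⁻¹` in `U_p^{(j)}(sl2)`. -/
def ugen (p : ℂ) (i : Fin 4) : Uj p := RingQuot.mkAlgHom ℂ (UjRel p) (ι ℂ i)

/-- The relations of the Jordanian quantum group `SL_p^{(j)}(2,ℂ)`, with generators
`α = ι ℂ 0`, `β = ι ℂ 1`, `γ = ι ℂ 2`, `δ = ι ℂ 3`. -/
inductive JRel (p : ℂ) : FreeAlgebra ℂ (Fin 4) → FreeAlgebra ℂ (Fin 4) → Prop
  | ab : JRel p (ι ℂ 0 * ι ℂ 1 - ι ℂ 1 * ι ℂ 0) (p • (ι ℂ 0 * ι ℂ 0) - p • 1)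
  | ag : JRel p (ι ℂ 0 * ι ℂ 2 - ι ℂ 2 * ι ℂ 0) ((-p) • (ι ℂ 2 * ι ℂ 2))
  | bd : JRel p (ι ℂ 1 * ι ℂ 3 - ι ℂ 3 * ι ℂ 1) (p • 1 - p • (ι ℂ 3 * ι ℂ 3))
  | gd : JRel p (ι ℂ 2 * ι ℂ 3 - ι ℂ 3 * ι ℂ 2) (p • (ι ℂ 2 * ι ℂ 2))
  | ad : JRel p (ι ℂ 0 * ι ℂ 3 - ι ℂ 3 * ι ℂ 0) (p • ((ι ℂ 0 - ι ℂ 3) * ι ℂ 2))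
  | bg : JRel p (ι ℂ 1 * ι ℂ 2 - ι ℂ 2 * ι ℂ 1)
      ((-p) • (ι ℂ 0 * ι ℂ 2) - p • (ι ℂ 2 * ι ℂ 3))
  | det : JRel p (ι ℂ 0 * ι ℂ 3 - ι ℂ 1 * ι ℂ 2 - p • (ι ℂ 0 * ι ℂ 2)) 1

/-- The Jordanian quantum group `SL_p^{(j)}(2,ℂ)`. -/
abbrev SLj (p : ℂ) := RingQuot (JRel p)

/-- The images of the generators `α, β, γ, δ` in `SL_p^{(j)}(2,ℂ)`. -/
def agen (p : ℂ) (i : Fin 4) : SLj p := RingQuot.mkAlgHom ℂ (JRel p) (ι ℂ i)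

/-- The pairing on tensor squares induced by a bilinear pairing `B`:
`(x ⊗ y, f ⊗ g) ↦ B x f · B y g`. -/
def pair2 {H A : Type*} [AddCommGroup H] [Module ℂ H] [AddCommGroup A] [Module ℂ A]
    (B : H →ₗ[ℂ] Module.Dual ℂ A) :
    (H ⊗[ℂ] H) →ₗ[ℂ] Module.Dual ℂ (A ⊗[ℂ] A) :=
  (TensorProduct.dualDistrib ℂ A A).comp (TensorProduct.map B B)

/-- `B` is a dual pairing of the Hopf algebras `H` (with comultiplication `ΔH` and
counit `εH`) and `A` (with comultiplication `ΔA` and counit `εA`):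
`⟨xy, f⟩ = Σ⟨x, f₍₁₎⟩⟨y, f₍₂₎⟩`, `⟨x, fg⟩ = Σ⟨x₍₁₎, f⟩⟨x₍₂₎, g⟩`, `⟨1, f⟩ = εA f`,
`⟨x, 1⟩ = εH x`. -/
def IsDualPairing {H A : Type*} [Ring H] [Algebra ℂ H] [Ring A] [Algebra ℂ A]
    (B : H →ₗ[ℂ] Module.Dual ℂ A)
    (ΔH : H →ₐ[ℂ] (H ⊗[ℂ] H)) (εH : H →ₐ[ℂ] ℂ)
    (ΔA : A →ₐ[ℂ] (A ⊗[ℂ] A)) (εA : A →ₐ[ℂ] ℂ) : Prop :=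
  (∀ (x y : H) (f : A), B (x * y) f = pair2 B (x ⊗ₜ[ℂ] y) (ΔA f)) ∧
  (∀ (x : H) (f g : A), B x (f * g) = pair2 B (ΔH x) (f ⊗ₜ[ℂ] g)) ∧
  (∀ f : A, B 1 f = εA f) ∧
  (∀ x : H, B x 1 = εH x)

/-- `ΔH` is the comultiplication of `U_p^{(j)}(sl2)`: `Δ(h) = h⊗t + t⁻¹⊗h`,
`Δ(y) = y⊗t + t⁻¹⊗y`, `Δ(t^{±1}) = t^{±1}⊗t^{±1}`. -/
def IsUComul (p : ℂ) (ΔH : Uj p →ₐ[ℂ] (Uj p ⊗[ℂ] Uj p)) : Prop :=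
  ΔH (ugen p 0) = ugen p 0 ⊗ₜ[ℂ] ugen p 2 + ugen p 3 ⊗ₜ[ℂ] ugen p 0 ∧
  ΔH (ugen p 1) = ugen p 1 ⊗ₜ[ℂ] ugen p 2 + ugen p 3 ⊗ₜ[ℂ] ugen p 1 ∧
  ΔH (ugen p 2) = ugen p 2 ⊗ₜ[ℂ] ugen p 2 ∧
  ΔH (ugen p 3) = ugen p 3 ⊗ₜ[ℂ] ugen p 3

/-- `εH` is the counit of `U_p^{(j)}(sl2)`. -/
def IsUCounit (p : ℂ) (εH : Uj p →ₐ[ℂ] ℂ) : Prop :=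
  εH (ugen p 0) = 0 ∧ εH (ugen p 1) = 0 ∧ εH (ugen p 2) = 1 ∧ εH (ugen p 3) = 1

/-- `ΔA` is the matrix comultiplication of `SL_p^{(j)}(2,ℂ)`. -/
def IsAComul (p : ℂ) (ΔA : SLj p →ₐ[ℂ] (SLj p ⊗[ℂ] SLj p)) : Prop :=
  ΔA (agen p 0) = agen p 0 ⊗ₜ[ℂ] agen p 0 + agen p 1 ⊗ₜ[ℂ] agen p 2 ∧
  ΔA (agen p 1) = agen p 0 ⊗ₜ[ℂ] agen p 1 + agen p 1 ⊗ₜ[ℂ] agen p 3 ∧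
  ΔA (agen p 2) = agen p 2 ⊗ₜ[ℂ] agen p 0 + agen p 3 ⊗ₜ[ℂ] agen p 2 ∧
  ΔA (agen p 3) = agen p 2 ⊗ₜ[ℂ] agen p 1 + agen p 3 ⊗ₜ[ℂ] agen p 3

/-- `εA` is the counit of `SL_p^{(j)}(2,ℂ)`. -/
def IsACounit (p : ℂ) (εA : SLj p →ₐ[ℂ] ℂ) : Prop :=
  εA (agen p 0) = 1 ∧ εA (agen p 1) = 0 ∧ εA (agen p 2) = 0 ∧ εA (agen p 3) = 1

/-- The table of values of the pairing on generators (rows `h, y, t, t⁻¹`, columns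
`α, β, γ, δ`). -/
def vals (p : ℂ) : Fin 4 → Fin 4 → ℂ :=
  ![![1, 0, 0, -1], ![0, 0, 1, 0], ![1, p, 0, 1], ![1, -p, 0, 1]]

set_option maxHeartbeats 1600000
set_option synthInstance.maxHeartbeats 400000

/-! ### Induction principles and ext lemmas -/

theorem SLj.induction {p : ℂ} {motive : SLj p → Prop}
    (halg : ∀ c : ℂ, motive (algebraMap ℂ (SLj p) c))
    (hgen : ∀ i, motive (agen p i))
    (hmul : ∀ x y, motive x → motive y → motive (x * y))
    (hadd : ∀ x y, motive x → motive y → motive (x + y)) :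
    ∀ x, motive x := by
  intro x
  obtain ⟨x, rfl⟩ := RingQuot.mkAlgHom_surjective ℂ (JRel p) x
  induction x using FreeAlgebra.induction with
  | grade0 c => rw [AlgHom.commutes]; exact halg c
  | grade1 i => exact hgen i
  | mul a b ha hb => rw [map_mul]; exact hmul _ _ ha hb
  | add a b ha hb => rw [map_add]; exact hadd _ _ ha hb

theorem Uj.induction {p : ℂ} {motive : Uj p → Prop}
    (halg : ∀ c : ℂ, motive (algebraMap ℂ (Uj p) c))
    (hgen : ∀ i, motive (ugen p i))
    (hmul : ∀ x y, motive x → motive y → motive (x * y))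
    (hadd : ∀ x y, motive x → motive y → motive (x + y)) :
    ∀ x, motive x := by
  intro x
  obtain ⟨x, rfl⟩ := RingQuot.mkAlgHom_surjective ℂ (UjRel p) x
  induction x using FreeAlgebra.induction with
  | grade0 c => rw [AlgHom.commutes]; exact halg c
  | grade1 i => exact hgen i
  | mul a b ha hb => rw [map_mul]; exact hmul _ _ ha hb
  | add a b ha hb => rw [map_add]; exact hadd _ _ ha hb

theorem SLj.algHom_ext {p : ℂ} {B' : Type*} [Semiring B'] [Algebra ℂ B']
    {F G : SLj p →ₐ[ℂ] B'} (h : ∀ i, F (agen p i) = G (agen p i)) : F = G := by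
  apply RingQuot.ringQuot_ext'
  apply FreeAlgebra.hom_ext
  funext i
  simpa [agen] using h i
/-! ### The matrix realization of the functionals `H, Y, T, T⁻¹` on `SLj` -/

/-- Generator images: row/col `0,1,2` correspond to the functionals `t⁻¹`-char (diag 0),
`h` (entry 01), `y` (entry 02), `t`-char (diag 1 and 2). -/
def Amat (p : ℂ) : Fin 4 → Matrix (Fin 3) (Fin 3) ℂ :=
  ![!![1, 1, 0; 0, 1, 0; 0, 0, 1],
    !![-p, 0, 0; 0, p, 0; 0, 0, p],
    !![0, 0, 1; 0, 0, 0; 0, 0, 0],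
    !![1, -1, 0; 0, 1, 0; 0, 0, 1]]

set_option maxHeartbeats 800000 in
theorem Amat_rels (p : ℂ) :
    (Amat p 0 * Amat p 1 - Amat p 1 * Amat p 0 = p • (Amat p 0 * Amat p 0) - p • 1) ∧
    (Amat p 0 * Amat p 2 - Amat p 2 * Amat p 0 = (-p) • (Amat p 2 * Amat p 2)) ∧
    (Amat p 1 * Amat p 3 - Amat p 3 * Amat p 1 = p • 1 - p • (Amat p 3 * Amat p 3)) ∧
    (Amat p 2 * Amat p 3 - Amat p 3 * Amat p 2 = p • (Amat p 2 * Amat p 2)) ∧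
    (Amat p 0 * Amat p 3 - Amat p 3 * Amat p 0 = p • ((Amat p 0 - Amat p 3) * Amat p 2)) ∧
    (Amat p 1 * Amat p 2 - Amat p 2 * Amat p 1 =
      (-p) • (Amat p 0 * Amat p 2) - p • (Amat p 2 * Amat p 3)) ∧
    (Amat p 0 * Amat p 3 - Amat p 1 * Amat p 2 - p • (Amat p 0 * Amat p 2) = 1) := by
  refine ⟨?_, ?_, ?_, ?_, ?_, ?_, ?_⟩ <;>
  · ext i j
    fin_cases i <;> fin_cases j <;>
      simp [Amat, Matrix.mul_apply, Fin.sum_univ_three, Matrix.one_apply,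
        Matrix.vecHead, Matrix.vecTail] <;> ring

def rhoA (p : ℂ) : SLj p →ₐ[ℂ] Matrix (Fin 3) (Fin 3) ℂ :=
  RingQuot.liftAlgHom ℂ ⟨FreeAlgebra.lift ℂ (Amat p), by
    obtain ⟨h1, h2, h3, h4, h5, h6, h7⟩ := Amat_rels p
    rintro x y ⟨⟩ <;>
      simp only [map_sub, map_mul, map_smul, map_add, map_one, FreeAlgebra.lift_ι_apply] <;>
      first
      | exact h1 | exact h2 | exact h3 | exact h4 | exact h5 | exact h6 | exact h7⟩

@[simp] theorem rhoA_agen (p : ℂ) (i : Fin 4) : rhoA p (agen p i) = Amat p i := by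
  simp [rhoA, agen, RingQuot.liftAlgHom_mkAlgHom_apply, FreeAlgebra.lift_ι_apply]

/-- The four linear functionals on `SLj p`. -/
def entryL (i j : Fin 3) : Matrix (Fin 3) (Fin 3) ℂ →ₗ[ℂ] ℂ where
  toFun m := m i j
  map_add' _ _ := rfl
  map_smul' _ _ := rfl

def Hf (p : ℂ) : Module.Dual ℂ (SLj p) := (entryL 0 1).comp (rhoA p).toLinearMap
def Yf (p : ℂ) : Module.Dual ℂ (SLj p) := (entryL 0 2).comp (rhoA p).toLinearMap
def Tf (p : ℂ) : Module.Dual ℂ (SLj p) := (entryL 1 1).comp (rhoA p).toLinearMap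
def Tif (p : ℂ) : Module.Dual ℂ (SLj p) := (entryL 0 0).comp (rhoA p).toLinearMap

theorem Hf_apply (p : ℂ) (f : SLj p) : Hf p f = rhoA p f 0 1 := rfl
theorem Yf_apply (p : ℂ) (f : SLj p) : Yf p f = rhoA p f 0 2 := rfl
theorem Tf_apply (p : ℂ) (f : SLj p) : Tf p f = rhoA p f 1 1 := rfl
theorem Tif_apply (p : ℂ) (f : SLj p) : Tif p f = rhoA p f 0 0 := rfl

theorem rhoA_shape (p : ℂ) (f : SLj p) :
    rhoA p f 1 0 = 0 ∧ rhoA p f 1 2 = 0 ∧ rhoA p f 2 0 = 0 ∧ rhoA p f 2 1 = 0 ∧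
      rhoA p f 2 2 = rhoA p f 1 1 := by
  induction f using SLj.induction with
  | halg c => simp [Matrix.algebraMap_matrix_apply]
  | hgen i => fin_cases i <;> simp [Amat, Matrix.vecHead, Matrix.vecTail]
  | hmul x y hx hy =>
      obtain ⟨x1, x2, x3, x4, x5⟩ := hx
      obtain ⟨y1, y2, y3, y4, y5⟩ := hy
      simp [Matrix.mul_apply, Fin.sum_univ_three, x1, x2, x3, x4, x5, y1, y2, y3, y4, y5]
  | hadd x y hx hy =>
      obtain ⟨x1, x2, x3, x4, x5⟩ := hx
      obtain ⟨y1, y2, y3, y4, y5⟩ := hy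
      simp [x1, x2, x3, x4, x5, y1, y2, y3, y4, y5]

theorem Hf_mul (p : ℂ) (f g : SLj p) :
    Hf p (f * g) = Hf p f * Tf p g + Tif p f * Hf p g := by
  obtain ⟨g1, g2, g3, g4, g5⟩ := rhoA_shape p g
  simp only [Hf_apply, Tf_apply, Tif_apply, map_mul, Matrix.mul_apply, Fin.sum_univ_three,
    g1, g2, g3, g4, g5]
  ring

theorem Yf_mul (p : ℂ) (f g : SLj p) :
    Yf p (f * g) = Yf p f * Tf p g + Tif p f * Yf p g := by
  obtain ⟨g1, g2, g3, g4, g5⟩ := rhoA_shape p g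
  simp only [Yf_apply, Tf_apply, Tif_apply, map_mul, Matrix.mul_apply, Fin.sum_univ_three,
    g1, g2, g3, g4, g5]
  ring

theorem Tf_mul (p : ℂ) (f g : SLj p) :
    Tf p (f * g) = Tf p f * Tf p g + (0 : Module.Dual ℂ (SLj p)) f * Tf p g := by
  obtain ⟨f1, f2, f3, f4, f5⟩ := rhoA_shape p f
  simp only [Tf_apply, map_mul, Matrix.mul_apply, Fin.sum_univ_three, f1, f2, f3, f4, f5,
    LinearMap.zero_apply]
  ring

theorem Tif_mul (p : ℂ) (f g : SLj p) :
    Tif p (f * g) = Tif p f * Tif p g + (0 : Module.Dual ℂ (SLj p)) f * Tif p g := by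
  obtain ⟨g1, g2, g3, g4, g5⟩ := rhoA_shape p g
  simp only [Tif_apply, map_mul, Matrix.mul_apply, Fin.sum_univ_three, g1, g2, g3, g4, g5,
    LinearMap.zero_apply]
  ring

@[simp] theorem Hf_one (p : ℂ) : Hf p 1 = 0 := by simp [Hf_apply, Matrix.one_apply]
@[simp] theorem Yf_one (p : ℂ) : Yf p 1 = 0 := by simp [Yf_apply, Matrix.one_apply]
@[simp] theorem Tf_one (p : ℂ) : Tf p 1 = 1 := by simp [Tf_apply, Matrix.one_apply]
@[simp] theorem Tif_one (p : ℂ) : Tif p 1 = 1 := by simp [Tif_apply, Matrix.one_apply]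

@[simp] theorem Hf_agen (p : ℂ) (j : Fin 4) : Hf p (agen p j) = ![1, 0, 0, -1] j := by
  fin_cases j <;> simp [Hf_apply, Amat, Matrix.vecHead, Matrix.vecTail]
@[simp] theorem Yf_agen (p : ℂ) (j : Fin 4) : Yf p (agen p j) = ![0, 0, 1, 0] j := by
  fin_cases j <;> simp [Yf_apply, Amat, Matrix.vecHead, Matrix.vecTail]
@[simp] theorem Tf_agen (p : ℂ) (j : Fin 4) : Tf p (agen p j) = ![1, p, 0, 1] j := by
  fin_cases j <;> simp [Tf_apply, Amat, Matrix.vecHead, Matrix.vecTail]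
@[simp] theorem Tif_agen (p : ℂ) (j : Fin 4) : Tif p (agen p j) = ![1, -p, 0, 1] j := by
  fin_cases j <;> simp [Tif_apply, Amat, Matrix.vecHead, Matrix.vecTail]
/-! ### Convolution algebra machinery -/

section Conv

variable {A : Type*} [Ring A] [Algebra ℂ A]

/-- Convolution product of two linear functionals relative to a comultiplication `Δ`. -/
def cmul (Δ : A →ₐ[ℂ] A ⊗[ℂ] A) (φ ψ : Module.Dual ℂ A) : Module.Dual ℂ A :=
  (TensorProduct.dualDistrib ℂ A A (φ ⊗ₜ[ℂ] ψ)).comp Δ.toLinearMap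

theorem cmul_apply (Δ : A →ₐ[ℂ] A ⊗[ℂ] A) (φ ψ : Module.Dual ℂ A) (f : A) :
    cmul Δ φ ψ f = TensorProduct.dualDistrib ℂ A A (φ ⊗ₜ[ℂ] ψ) (Δ f) := rfl

theorem cmul_add_left (Δ : A →ₐ[ℂ] A ⊗[ℂ] A) (φ φ' ψ : Module.Dual ℂ A) :
    cmul Δ (φ + φ') ψ = cmul Δ φ ψ + cmul Δ φ' ψ := by
  ext f; simp [cmul_apply, TensorProduct.add_tmul]

theorem cmul_add_right (Δ : A →ₐ[ℂ] A ⊗[ℂ] A) (φ ψ ψ' : Module.Dual ℂ A) :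
    cmul Δ φ (ψ + ψ') = cmul Δ φ ψ + cmul Δ φ ψ' := by
  ext f; simp [cmul_apply, TensorProduct.tmul_add]

theorem cmul_smul_left (Δ : A →ₐ[ℂ] A ⊗[ℂ] A) (c : ℂ) (φ ψ : Module.Dual ℂ A) :
    cmul Δ (c • φ) ψ = c • cmul Δ φ ψ := by
  ext f
  rw [cmul_apply, ← TensorProduct.smul_tmul', map_smul]
  simp [cmul_apply]

theorem cmul_smul_right (Δ : A →ₐ[ℂ] A ⊗[ℂ] A) (c : ℂ) (φ ψ : Module.Dual ℂ A) :
    cmul Δ φ (c • ψ) = c • cmul Δ φ ψ := by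
  ext f; simp [cmul_apply, TensorProduct.tmul_smul]

theorem cmul_zero_left (Δ : A →ₐ[ℂ] A ⊗[ℂ] A) (ψ : Module.Dual ℂ A) :
    cmul Δ 0 ψ = 0 := by
  ext f; simp [cmul_apply, TensorProduct.zero_tmul]

theorem cmul_zero_right (Δ : A →ₐ[ℂ] A ⊗[ℂ] A) (φ : Module.Dual ℂ A) :
    cmul Δ φ 0 = 0 := by
  ext f; simp [cmul_apply, TensorProduct.tmul_zero]

theorem cmul_sub_left (Δ : A →ₐ[ℂ] A ⊗[ℂ] A) (φ φ' ψ : Module.Dual ℂ A) :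
    cmul Δ (φ - φ') ψ = cmul Δ φ ψ - cmul Δ φ' ψ := by
  ext f; simp [cmul_apply, TensorProduct.sub_tmul]

theorem cmul_sub_right (Δ : A →ₐ[ℂ] A ⊗[ℂ] A) (φ ψ ψ' : Module.Dual ℂ A) :
    cmul Δ φ (ψ - ψ') = cmul Δ φ ψ - cmul Δ φ ψ' := by
  ext f; simp [cmul_apply, TensorProduct.tmul_sub]

/-- The key expansion of the convolution product of two skew-derivation-like functionals
on a product of two tensors. -/
theorem dd_mul_expand (φ ψ a₁ a₂ b₁ b₂ : Module.Dual ℂ A)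
    (hφ : ∀ x y : A, φ (x * y) = φ x * a₂ y + a₁ x * φ y)
    (hψ : ∀ x y : A, ψ (x * y) = ψ x * b₂ y + b₁ x * ψ y) (u v : A ⊗[ℂ] A) :
    TensorProduct.dualDistrib ℂ A A (φ ⊗ₜ[ℂ] ψ) (u * v)
      = TensorProduct.dualDistrib ℂ A A (φ ⊗ₜ[ℂ] ψ) u
          * TensorProduct.dualDistrib ℂ A A (a₂ ⊗ₜ[ℂ] b₂) v
        + TensorProduct.dualDistrib ℂ A A (φ ⊗ₜ[ℂ] b₁) u
          * TensorProduct.dualDistrib ℂ A A (a₂ ⊗ₜ[ℂ] ψ) v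
        + TensorProduct.dualDistrib ℂ A A (a₁ ⊗ₜ[ℂ] ψ) u
          * TensorProduct.dualDistrib ℂ A A (φ ⊗ₜ[ℂ] b₂) v
        + TensorProduct.dualDistrib ℂ A A (a₁ ⊗ₜ[ℂ] b₁) u
          * TensorProduct.dualDistrib ℂ A A (φ ⊗ₜ[ℂ] ψ) v := by
  induction u with
  | zero => simp
  | tmul x y =>
      induction v with
      | zero => simp
      | tmul x' y' =>
          simp only [Algebra.TensorProduct.tmul_mul_tmul, TensorProduct.dualDistrib_apply,
            hφ, hψ]
          ring
      | add v1 v2 h1 h2 =>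
          simp only [mul_add, map_add, h1, h2]
          ring
  | add u1 u2 h1 h2 =>
      simp only [add_mul, map_add, h1, h2]
      ring

theorem cmul_mul (Δ : A →ₐ[ℂ] A ⊗[ℂ] A) (φ ψ a₁ a₂ b₁ b₂ : Module.Dual ℂ A)
    (hφ : ∀ x y : A, φ (x * y) = φ x * a₂ y + a₁ x * φ y)
    (hψ : ∀ x y : A, ψ (x * y) = ψ x * b₂ y + b₁ x * ψ y) (f g : A) :
    cmul Δ φ ψ (f * g)
      = cmul Δ φ ψ f * cmul Δ a₂ b₂ g + cmul Δ φ b₁ f * cmul Δ a₂ ψ g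
        + cmul Δ a₁ ψ f * cmul Δ φ b₂ g + cmul Δ a₁ b₁ f * cmul Δ φ ψ g := by
  simp only [cmul_apply, map_mul]
  exact dd_mul_expand φ ψ a₁ a₂ b₁ b₂ hφ hψ (Δ f) (Δ g)

/-- Coassociativity, as a pointwise statement. -/
def CoassocP (Δ : A →ₐ[ℂ] A ⊗[ℂ] A) : Prop :=
  ∀ f : A, (Algebra.TensorProduct.map Δ (AlgHom.id ℂ A)) (Δ f)
    = (Algebra.TensorProduct.assoc ℂ ℂ ℂ A A A).symm
        ((Algebra.TensorProduct.map (AlgHom.id ℂ A) Δ) (Δ f))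

/-- Left counit law. -/
def CounitLP (Δ : A →ₐ[ℂ] A ⊗[ℂ] A) (ε : A →ₐ[ℂ] ℂ) : Prop :=
  ∀ f : A, (Algebra.TensorProduct.lid ℂ A)
    ((Algebra.TensorProduct.map ε (AlgHom.id ℂ A)) (Δ f)) = f

/-- Right counit law. -/
def CounitRP (Δ : A →ₐ[ℂ] A ⊗[ℂ] A) (ε : A →ₐ[ℂ] ℂ) : Prop :=
  ∀ f : A, (Algebra.TensorProduct.rid ℂ ℂ A)
    ((Algebra.TensorProduct.map (AlgHom.id ℂ A) ε) (Δ f)) = f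

theorem dd_counitL (ε : A →ₐ[ℂ] ℂ) (φ : Module.Dual ℂ A) (u : A ⊗[ℂ] A) :
    TensorProduct.dualDistrib ℂ A A (ε.toLinearMap ⊗ₜ[ℂ] φ) u
      = φ ((Algebra.TensorProduct.lid ℂ A)
            ((Algebra.TensorProduct.map ε (AlgHom.id ℂ A)) u)) := by
  induction u with
  | zero => simp
  | tmul a b =>
      simp [Algebra.TensorProduct.map_tmul, Algebra.TensorProduct.lid_tmul, smul_eq_mul]
  | add u1 u2 h1 h2 => simp [h1, h2]

theorem dd_counitR (ε : A →ₐ[ℂ] ℂ) (φ : Module.Dual ℂ A) (u : A ⊗[ℂ] A) :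
    TensorProduct.dualDistrib ℂ A A (φ ⊗ₜ[ℂ] ε.toLinearMap) u
      = φ ((Algebra.TensorProduct.rid ℂ ℂ A)
            ((Algebra.TensorProduct.map (AlgHom.id ℂ A) ε) u)) := by
  induction u with
  | zero => simp
  | tmul a b =>
      simp [Algebra.TensorProduct.map_tmul, Algebra.TensorProduct.rid_tmul, smul_eq_mul]
      ring
  | add u1 u2 h1 h2 => simp [h1, h2]

theorem dd_assoc_left (Δ : A →ₐ[ℂ] A ⊗[ℂ] A) (φ ψ ω : Module.Dual ℂ A) (u : A ⊗[ℂ] A) :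
    TensorProduct.dualDistrib ℂ A A ((cmul Δ φ ψ) ⊗ₜ[ℂ] ω) u
      = TensorProduct.dualDistrib ℂ (A ⊗[ℂ] A) A
          ((TensorProduct.dualDistrib ℂ A A (φ ⊗ₜ[ℂ] ψ)) ⊗ₜ[ℂ] ω)
          ((Algebra.TensorProduct.map Δ (AlgHom.id ℂ A)) u) := by
  induction u with
  | zero => simp
  | tmul a b => simp [cmul_apply, Algebra.TensorProduct.map_tmul]
  | add u1 u2 h1 h2 => simp [h1, h2]

theorem dd_assoc_right (Δ : A →ₐ[ℂ] A ⊗[ℂ] A) (φ ψ ω : Module.Dual ℂ A) (u : A ⊗[ℂ] A) :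
    TensorProduct.dualDistrib ℂ A A (φ ⊗ₜ[ℂ] (cmul Δ ψ ω)) u
      = TensorProduct.dualDistrib ℂ A (A ⊗[ℂ] A)
          (φ ⊗ₜ[ℂ] (TensorProduct.dualDistrib ℂ A A (ψ ⊗ₜ[ℂ] ω)))
          ((Algebra.TensorProduct.map (AlgHom.id ℂ A) Δ) u) := by
  induction u with
  | zero => simp
  | tmul a b => simp [cmul_apply, Algebra.TensorProduct.map_tmul]
  | add u1 u2 h1 h2 => simp [h1, h2]

theorem dd_assoc_mid (φ ψ ω : Module.Dual ℂ A) (w : (A ⊗[ℂ] A) ⊗[ℂ] A) :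
    TensorProduct.dualDistrib ℂ (A ⊗[ℂ] A) A
        ((TensorProduct.dualDistrib ℂ A A (φ ⊗ₜ[ℂ] ψ)) ⊗ₜ[ℂ] ω) w
      = TensorProduct.dualDistrib ℂ A (A ⊗[ℂ] A)
          (φ ⊗ₜ[ℂ] (TensorProduct.dualDistrib ℂ A A (ψ ⊗ₜ[ℂ] ω)))
          ((Algebra.TensorProduct.assoc ℂ ℂ ℂ A A A) w) := by
  induction w with
  | zero => simp
  | tmul u c =>
      induction u with
      | zero => simp [TensorProduct.zero_tmul]
      | tmul a b =>
          simp [Algebra.TensorProduct.assoc_tmul]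
          ring
      | add u1 u2 h1 h2 => simp [TensorProduct.add_tmul, h1, h2]
  | add w1 w2 h1 h2 => simp [h1, h2]

/-- The convolution algebra: the dual of `A` endowed with the convolution product
determined by `Δ`, with unit `ε`. -/
@[reducible] def ConvT (Δ : A →ₐ[ℂ] A ⊗[ℂ] A) (ε : A →ₐ[ℂ] ℂ)
    (_hco : CoassocP Δ) (_hl : CounitLP Δ ε) (_hr : CounitRP Δ ε) : Type _ :=
  Module.Dual ℂ A

variable (Δ : A →ₐ[ℂ] A ⊗[ℂ] A) (ε : A →ₐ[ℂ] ℂ)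
  (hco : CoassocP Δ) (hl : CounitLP Δ ε) (hr : CounitRP Δ ε)

instance : AddCommGroup (ConvT Δ ε hco hl hr) :=
  inferInstanceAs (AddCommGroup (Module.Dual ℂ A))

instance : Module ℂ (ConvT Δ ε hco hl hr) :=
  inferInstanceAs (Module ℂ (Module.Dual ℂ A))

instance : Ring (ConvT Δ ε hco hl hr) where
  __ := (inferInstanceAs (AddCommGroup (Module.Dual ℂ A)) : AddCommGroup (Module.Dual ℂ A))
  mul φ ψ := cmul Δ φ ψ
  one := ε.toLinearMap
  left_distrib φ ψ ω := cmul_add_right Δ φ ψ ω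
  right_distrib φ ψ ω := cmul_add_left Δ φ ψ ω
  zero_mul φ := cmul_zero_left Δ φ
  mul_zero φ := cmul_zero_right Δ φ
  mul_assoc φ ψ ω := by
    show cmul Δ (cmul Δ φ ψ) ω = cmul Δ φ (cmul Δ ψ ω)
    ext f
    rw [cmul_apply, cmul_apply, dd_assoc_left, dd_assoc_right, hco f, dd_assoc_mid]
    simp
  one_mul φ := by
    show cmul Δ ε.toLinearMap φ = φ
    ext f
    rw [cmul_apply, dd_counitL, hl f]
  mul_one φ := by
    show cmul Δ φ ε.toLinearMap = φ
    ext f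
    rw [cmul_apply, dd_counitR, hr f]

instance : Algebra ℂ (ConvT Δ ε hco hl hr) :=
  Algebra.ofModule (fun c φ ψ => cmul_smul_left Δ c φ ψ)
    (fun c φ ψ => cmul_smul_right Δ c φ ψ)

theorem ConvT.mul_def (φ ψ : ConvT Δ ε hco hl hr) :
    φ * ψ = cmul Δ φ ψ := rfl

theorem ConvT.one_def : (1 : ConvT Δ ε hco hl hr) = ε.toLinearMap := rfl

end Conv
/-! ### Skew-derivation vanishing and the convolution relations -/

theorem dual_vanish {p : ℂ} (θ χ₁ χ₂ : Module.Dual ℂ (SLj p))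
    (hmul : ∀ f g, θ (f * g) = θ f * χ₂ g + χ₁ f * θ g)
    (hone : θ 1 = 0) (hgen : ∀ i, θ (agen p i) = 0) : ∀ f, θ f = 0 := by
  intro f
  induction f using SLj.induction with
  | halg c => rw [Algebra.algebraMap_eq_smul_one, map_smul, hone, smul_zero]
  | hgen i => exact hgen i
  | hmul x y hx hy => rw [hmul, hx, hy]; ring
  | hadd x y hx hy => rw [map_add, hx, hy]; ring


theorem pair2_tmul {p : ℂ} (B : Uj p →ₗ[ℂ] Module.Dual ℂ (SLj p)) (x y : Uj p) :
    pair2 B (x ⊗ₜ[ℂ] y)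
      = TensorProduct.dualDistrib ℂ (SLj p) (SLj p) (B x ⊗ₜ[ℂ] B y) := by
  simp [pair2]

section Rels

variable (p : ℂ) (ΔA : SLj p →ₐ[ℂ] (SLj p ⊗[ℂ] SLj p)) (εA : SLj p →ₐ[ℂ] ℂ)

theorem cmul_one_apply (φ ψ : Module.Dual ℂ (SLj p)) :
    cmul ΔA φ ψ 1 = φ 1 * ψ 1 := by
  rw [cmul_apply, map_one, Algebra.TensorProduct.one_def, TensorProduct.dualDistrib_apply]

theorem cmul_agen (hΔA : IsAComul p ΔA) (φ ψ : Module.Dual ℂ (SLj p)) :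
    (cmul ΔA φ ψ (agen p 0) = φ (agen p 0) * ψ (agen p 0) + φ (agen p 1) * ψ (agen p 2)) ∧
    (cmul ΔA φ ψ (agen p 1) = φ (agen p 0) * ψ (agen p 1) + φ (agen p 1) * ψ (agen p 3)) ∧
    (cmul ΔA φ ψ (agen p 2) = φ (agen p 2) * ψ (agen p 0) + φ (agen p 3) * ψ (agen p 2)) ∧
    (cmul ΔA φ ψ (agen p 3) = φ (agen p 2) * ψ (agen p 1) + φ (agen p 3) * ψ (agen p 3)) := by
  obtain ⟨h0, h1, h2, h3⟩ := hΔA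
  refine ⟨?_, ?_, ?_, ?_⟩ <;>
    simp [cmul_apply, h0, h1, h2, h3, TensorProduct.dualDistrib_apply]

variable (hΔA : IsAComul p ΔA) (hεA : IsACounit p εA)

include hΔA hεA

theorem rel_TTi : cmul ΔA (Tf p) (Tif p) = εA.toLinearMap := by
  have key := dual_vanish (cmul ΔA (Tf p) (Tif p) - εA.toLinearMap)
      εA.toLinearMap (cmul ΔA (Tf p) (Tif p)) ?_ ?_ ?_
  · ext f
    have h := key f
    rw [LinearMap.sub_apply, sub_eq_zero] at h
    exact h
  · intro f g
    have e1 := cmul_mul ΔA (Tf p) (Tif p) 0 (Tf p) 0 (Tif p) (Tf_mul p) (Tif_mul p) f g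
    simp only [cmul_zero_left, cmul_zero_right, LinearMap.zero_apply, zero_mul, mul_zero,
      add_zero, zero_add] at e1
    simp only [LinearMap.sub_apply, e1, AlgHom.toLinearMap_apply, map_mul]
    ring
  · simp [cmul_one_apply, AlgHom.toLinearMap_apply]
  · intro i
    obtain ⟨g0, g1, g2, g3⟩ := cmul_agen p ΔA hΔA (Tf p) (Tif p)
    obtain ⟨e0, e1, e2, e3⟩ := hεA
    fin_cases i <;>
      simp [LinearMap.sub_apply, AlgHom.toLinearMap_apply, g0, g1, g2, g3,
        e0, e1, e2, e3] <;> ring_nf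

theorem rel_TiT : cmul ΔA (Tif p) (Tf p) = εA.toLinearMap := by
  have key := dual_vanish (cmul ΔA (Tif p) (Tf p) - εA.toLinearMap)
      εA.toLinearMap (cmul ΔA (Tif p) (Tf p)) ?_ ?_ ?_
  · ext f
    have h := key f
    rw [LinearMap.sub_apply, sub_eq_zero] at h
    exact h
  · intro f g
    have e1 := cmul_mul ΔA (Tif p) (Tf p) 0 (Tif p) 0 (Tf p) (Tif_mul p) (Tf_mul p) f g
    simp only [cmul_zero_left, cmul_zero_right, LinearMap.zero_apply, zero_mul, mul_zero,
      add_zero, zero_add] at e1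
    simp only [LinearMap.sub_apply, e1, AlgHom.toLinearMap_apply, map_mul]
    ring
  · simp [cmul_one_apply, AlgHom.toLinearMap_apply]
  · intro i
    obtain ⟨g0, g1, g2, g3⟩ := cmul_agen p ΔA hΔA (Tif p) (Tf p)
    obtain ⟨e0, e1, e2, e3⟩ := hεA
    fin_cases i <;>
      simp [LinearMap.sub_apply, AlgHom.toLinearMap_apply, g0, g1, g2, g3,
        e0, e1, e2, e3] <;> ring_nf

theorem rel_ht :
    cmul ΔA (Hf p) (Tf p) - cmul ΔA (Tf p) (Hf p)
      = cmul ΔA (Tf p) (Tf p) - εA.toLinearMap := by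
  have rTTi : ∀ x, cmul ΔA (Tf p) (Tif p) x = εA x := fun x => by
    rw [rel_TTi p ΔA εA hΔA hεA]; rfl
  have rTiT : ∀ x, cmul ΔA (Tif p) (Tf p) x = εA x := fun x => by
    rw [rel_TiT p ΔA εA hΔA hεA]; rfl
  have key := dual_vanish
      (cmul ΔA (Hf p) (Tf p) - cmul ΔA (Tf p) (Hf p) - cmul ΔA (Tf p) (Tf p)
        + εA.toLinearMap)
      εA.toLinearMap (cmul ΔA (Tf p) (Tf p)) ?_ ?_ ?_
  · ext f
    have h := key f
    simp only [LinearMap.add_apply, LinearMap.sub_apply, AlgHom.toLinearMap_apply] at h ⊢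
    linear_combination h
  · intro f g
    have eHT := cmul_mul ΔA (Hf p) (Tf p) (Tif p) (Tf p) 0 (Tf p) (Hf_mul p) (Tf_mul p) f g
    have eTH := cmul_mul ΔA (Tf p) (Hf p) 0 (Tf p) (Tif p) (Tf p) (Tf_mul p) (Hf_mul p) f g
    have eTT := cmul_mul ΔA (Tf p) (Tf p) 0 (Tf p) 0 (Tf p) (Tf_mul p) (Tf_mul p) f g
    simp only [cmul_zero_left, cmul_zero_right, LinearMap.zero_apply, zero_mul, mul_zero,
      add_zero, zero_add] at eHT eTH eTT
    simp only [LinearMap.add_apply, LinearMap.sub_apply, AlgHom.toLinearMap_apply,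
      eHT, eTH, eTT, map_mul, rTTi, rTiT]
    ring
  · simp [cmul_one_apply, LinearMap.add_apply, LinearMap.sub_apply,
      AlgHom.toLinearMap_apply]
  · intro i
    obtain ⟨a0, a1, a2, a3⟩ := cmul_agen p ΔA hΔA (Hf p) (Tf p)
    obtain ⟨b0, b1, b2, b3⟩ := cmul_agen p ΔA hΔA (Tf p) (Hf p)
    obtain ⟨c0, c1, c2, c3⟩ := cmul_agen p ΔA hΔA (Tf p) (Tf p)
    obtain ⟨e0, e1, e2, e3⟩ := hεA
    fin_cases i <;>
      simp [LinearMap.add_apply, LinearMap.sub_apply, AlgHom.toLinearMap_apply,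
        a0, a1, a2, a3, b0, b1, b2, b3, c0, c1, c2, c3, e0, e1, e2, e3] <;> ring_nf

theorem rel_hti :
    cmul ΔA (Hf p) (Tif p) - cmul ΔA (Tif p) (Hf p)
      = cmul ΔA (Tif p) (Tif p) - εA.toLinearMap := by
  have rTTi : ∀ x, cmul ΔA (Tf p) (Tif p) x = εA x := fun x => by
    rw [rel_TTi p ΔA εA hΔA hεA]; rfl
  have rTiT : ∀ x, cmul ΔA (Tif p) (Tf p) x = εA x := fun x => by
    rw [rel_TiT p ΔA εA hΔA hεA]; rfl
  have key := dual_vanish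
      (cmul ΔA (Hf p) (Tif p) - cmul ΔA (Tif p) (Hf p) - cmul ΔA (Tif p) (Tif p)
        + εA.toLinearMap)
      (cmul ΔA (Tif p) (Tif p)) εA.toLinearMap ?_ ?_ ?_
  · ext f
    have h := key f
    simp only [LinearMap.add_apply, LinearMap.sub_apply, AlgHom.toLinearMap_apply] at h ⊢
    linear_combination h
  · intro f g
    have eHTi := cmul_mul ΔA (Hf p) (Tif p) (Tif p) (Tf p) 0 (Tif p)
      (Hf_mul p) (Tif_mul p) f g
    have eTiH := cmul_mul ΔA (Tif p) (Hf p) 0 (Tif p) (Tif p) (Tf p)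
      (Tif_mul p) (Hf_mul p) f g
    have eTiTi := cmul_mul ΔA (Tif p) (Tif p) 0 (Tif p) 0 (Tif p)
      (Tif_mul p) (Tif_mul p) f g
    simp only [cmul_zero_left, cmul_zero_right, LinearMap.zero_apply, zero_mul, mul_zero,
      add_zero, zero_add] at eHTi eTiH eTiTi
    simp only [LinearMap.add_apply, LinearMap.sub_apply, AlgHom.toLinearMap_apply,
      eHTi, eTiH, eTiTi, map_mul, rTTi, rTiT]
    ring
  · simp [cmul_one_apply, LinearMap.add_apply, LinearMap.sub_apply,
      AlgHom.toLinearMap_apply]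
  · intro i
    obtain ⟨a0, a1, a2, a3⟩ := cmul_agen p ΔA hΔA (Hf p) (Tif p)
    obtain ⟨b0, b1, b2, b3⟩ := cmul_agen p ΔA hΔA (Tif p) (Hf p)
    obtain ⟨c0, c1, c2, c3⟩ := cmul_agen p ΔA hΔA (Tif p) (Tif p)
    obtain ⟨e0, e1, e2, e3⟩ := hεA
    fin_cases i <;>
      simp [LinearMap.add_apply, LinearMap.sub_apply, AlgHom.toLinearMap_apply,
        a0, a1, a2, a3, b0, b1, b2, b3, c0, c1, c2, c3, e0, e1, e2, e3] <;> ring_nf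

theorem rel_yt :
    cmul ΔA (Yf p) (Tf p) - cmul ΔA (Tf p) (Yf p)
      = (-(p / 2)) • (cmul ΔA (Hf p) (Tf p) + cmul ΔA (Tf p) (Hf p)) := by
  have rTTi : ∀ x, cmul ΔA (Tf p) (Tif p) x = εA x := fun x => by
    rw [rel_TTi p ΔA εA hΔA hεA]; rfl
  have rTiT : ∀ x, cmul ΔA (Tif p) (Tf p) x = εA x := fun x => by
    rw [rel_TiT p ΔA εA hΔA hεA]; rfl
  have key := dual_vanish
      (cmul ΔA (Yf p) (Tf p) - cmul ΔA (Tf p) (Yf p)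
        + (p / 2) • (cmul ΔA (Hf p) (Tf p) + cmul ΔA (Tf p) (Hf p)))
      εA.toLinearMap (cmul ΔA (Tf p) (Tf p)) ?_ ?_ ?_
  · ext f
    have h := key f
    simp only [LinearMap.add_apply, LinearMap.sub_apply, LinearMap.smul_apply,
      AlgHom.toLinearMap_apply, smul_eq_mul] at h ⊢
    linear_combination h
  · intro f g
    have eYT := cmul_mul ΔA (Yf p) (Tf p) (Tif p) (Tf p) 0 (Tf p) (Yf_mul p) (Tf_mul p) f g
    have eTY := cmul_mul ΔA (Tf p) (Yf p) 0 (Tf p) (Tif p) (Tf p) (Tf_mul p) (Yf_mul p) f g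
    have eHT := cmul_mul ΔA (Hf p) (Tf p) (Tif p) (Tf p) 0 (Tf p) (Hf_mul p) (Tf_mul p) f g
    have eTH := cmul_mul ΔA (Tf p) (Hf p) 0 (Tf p) (Tif p) (Tf p) (Tf_mul p) (Hf_mul p) f g
    simp only [cmul_zero_left, cmul_zero_right, LinearMap.zero_apply, zero_mul, mul_zero,
      add_zero, zero_add] at eYT eTY eHT eTH
    simp only [LinearMap.add_apply, LinearMap.sub_apply, LinearMap.smul_apply,
      AlgHom.toLinearMap_apply, smul_eq_mul, eYT, eTY, eHT, eTH, map_mul, rTTi, rTiT]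
    ring
  · simp [cmul_one_apply, LinearMap.add_apply, LinearMap.sub_apply, LinearMap.smul_apply,
      AlgHom.toLinearMap_apply]
  · intro i
    obtain ⟨a0, a1, a2, a3⟩ := cmul_agen p ΔA hΔA (Yf p) (Tf p)
    obtain ⟨b0, b1, b2, b3⟩ := cmul_agen p ΔA hΔA (Tf p) (Yf p)
    obtain ⟨c0, c1, c2, c3⟩ := cmul_agen p ΔA hΔA (Hf p) (Tf p)
    obtain ⟨d0, d1, d2, d3⟩ := cmul_agen p ΔA hΔA (Tf p) (Hf p)
    obtain ⟨e0, e1, e2, e3⟩ := hεA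
    fin_cases i <;>
      simp [LinearMap.add_apply, LinearMap.sub_apply, LinearMap.smul_apply, smul_eq_mul,
        a0, a1, a2, a3, b0, b1, b2, b3, c0, c1, c2, c3, d0, d1, d2, d3,
        e0, e1, e2, e3] <;> ring_nf

theorem rel_yti :
    cmul ΔA (Yf p) (Tif p) - cmul ΔA (Tif p) (Yf p)
      = (p / 2) • (cmul ΔA (Hf p) (Tif p) + cmul ΔA (Tif p) (Hf p)) := by
  have rTTi : ∀ x, cmul ΔA (Tf p) (Tif p) x = εA x := fun x => by
    rw [rel_TTi p ΔA εA hΔA hεA]; rfl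
  have rTiT : ∀ x, cmul ΔA (Tif p) (Tf p) x = εA x := fun x => by
    rw [rel_TiT p ΔA εA hΔA hεA]; rfl
  have key := dual_vanish
      (cmul ΔA (Yf p) (Tif p) - cmul ΔA (Tif p) (Yf p)
        - (p / 2) • (cmul ΔA (Hf p) (Tif p) + cmul ΔA (Tif p) (Hf p)))
      (cmul ΔA (Tif p) (Tif p)) εA.toLinearMap ?_ ?_ ?_
  · ext f
    have h := key f
    simp only [LinearMap.add_apply, LinearMap.sub_apply, LinearMap.smul_apply,
      AlgHom.toLinearMap_apply, smul_eq_mul] at h ⊢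
    linear_combination h
  · intro f g
    have eYTi := cmul_mul ΔA (Yf p) (Tif p) (Tif p) (Tf p) 0 (Tif p)
      (Yf_mul p) (Tif_mul p) f g
    have eTiY := cmul_mul ΔA (Tif p) (Yf p) 0 (Tif p) (Tif p) (Tf p)
      (Tif_mul p) (Yf_mul p) f g
    have eHTi := cmul_mul ΔA (Hf p) (Tif p) (Tif p) (Tf p) 0 (Tif p)
      (Hf_mul p) (Tif_mul p) f g
    have eTiH := cmul_mul ΔA (Tif p) (Hf p) 0 (Tif p) (Tif p) (Tf p)
      (Tif_mul p) (Hf_mul p) f g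
    simp only [cmul_zero_left, cmul_zero_right, LinearMap.zero_apply, zero_mul, mul_zero,
      add_zero, zero_add] at eYTi eTiY eHTi eTiH
    simp only [LinearMap.add_apply, LinearMap.sub_apply, LinearMap.smul_apply,
      AlgHom.toLinearMap_apply, smul_eq_mul, eYTi, eTiY, eHTi, eTiH, map_mul, rTTi, rTiT]
    ring
  · simp [cmul_one_apply, LinearMap.add_apply, LinearMap.sub_apply, LinearMap.smul_apply,
      AlgHom.toLinearMap_apply]
  · intro i
    obtain ⟨a0, a1, a2, a3⟩ := cmul_agen p ΔA hΔA (Yf p) (Tif p)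
    obtain ⟨b0, b1, b2, b3⟩ := cmul_agen p ΔA hΔA (Tif p) (Yf p)
    obtain ⟨c0, c1, c2, c3⟩ := cmul_agen p ΔA hΔA (Hf p) (Tif p)
    obtain ⟨d0, d1, d2, d3⟩ := cmul_agen p ΔA hΔA (Tif p) (Hf p)
    obtain ⟨e0, e1, e2, e3⟩ := hεA
    fin_cases i <;>
      simp [LinearMap.add_apply, LinearMap.sub_apply, LinearMap.smul_apply, smul_eq_mul,
        a0, a1, a2, a3, b0, b1, b2, b3, c0, c1, c2, c3, d0, d1, d2, d3,
        e0, e1, e2, e3] <;> ring_nf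

theorem rel_hy :
    cmul ΔA (Hf p) (Yf p) - cmul ΔA (Yf p) (Hf p)
      = (-(1 / 2 : ℂ)) • (cmul ΔA (Yf p) (Tf p) + cmul ΔA (Tf p) (Yf p)
          + cmul ΔA (Yf p) (Tif p) + cmul ΔA (Tif p) (Yf p)) := by
  have rTTi : ∀ x, cmul ΔA (Tf p) (Tif p) x = εA x := fun x => by
    rw [rel_TTi p ΔA εA hΔA hεA]; rfl
  have rTiT : ∀ x, cmul ΔA (Tif p) (Tf p) x = εA x := fun x => by
    rw [rel_TiT p ΔA εA hΔA hεA]; rfl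
  have rht : ∀ x, cmul ΔA (Hf p) (Tf p) x
      = cmul ΔA (Tf p) (Hf p) x + cmul ΔA (Tf p) (Tf p) x - εA x := fun x => by
    have h := LinearMap.congr_fun (rel_ht p ΔA εA hΔA hεA) x
    simp only [LinearMap.sub_apply, AlgHom.toLinearMap_apply] at h
    linear_combination h
  have rhti : ∀ x, cmul ΔA (Hf p) (Tif p) x
      = cmul ΔA (Tif p) (Hf p) x + cmul ΔA (Tif p) (Tif p) x - εA x := fun x => by
    have h := LinearMap.congr_fun (rel_hti p ΔA εA hΔA hεA) x
    simp only [LinearMap.sub_apply, AlgHom.toLinearMap_apply] at h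
    linear_combination h
  have ryt : ∀ x, cmul ΔA (Yf p) (Tf p) x
      = cmul ΔA (Tf p) (Yf p) x
        - (p / 2) * (cmul ΔA (Hf p) (Tf p) x + cmul ΔA (Tf p) (Hf p) x) := fun x => by
    have h := LinearMap.congr_fun (rel_yt p ΔA εA hΔA hεA) x
    simp only [LinearMap.sub_apply, LinearMap.add_apply, LinearMap.smul_apply,
      smul_eq_mul] at h
    linear_combination h
  have ryti : ∀ x, cmul ΔA (Yf p) (Tif p) x
      = cmul ΔA (Tif p) (Yf p) x
        + (p / 2) * (cmul ΔA (Hf p) (Tif p) x + cmul ΔA (Tif p) (Hf p) x) := fun x => by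
    have h := LinearMap.congr_fun (rel_yti p ΔA εA hΔA hεA) x
    simp only [LinearMap.sub_apply, LinearMap.add_apply, LinearMap.smul_apply,
      smul_eq_mul] at h
    linear_combination h
  have key := dual_vanish
      (cmul ΔA (Hf p) (Yf p) - cmul ΔA (Yf p) (Hf p)
        + (1 / 2 : ℂ) • (cmul ΔA (Yf p) (Tf p) + cmul ΔA (Tf p) (Yf p)
            + cmul ΔA (Yf p) (Tif p) + cmul ΔA (Tif p) (Yf p)))
      (cmul ΔA (Tif p) (Tif p)) (cmul ΔA (Tf p) (Tf p)) ?_ ?_ ?_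
  · ext f
    have h := key f
    simp only [LinearMap.add_apply, LinearMap.sub_apply, LinearMap.smul_apply,
      smul_eq_mul] at h ⊢
    linear_combination h
  · intro f g
    have eHY := cmul_mul ΔA (Hf p) (Yf p) (Tif p) (Tf p) (Tif p) (Tf p)
      (Hf_mul p) (Yf_mul p) f g
    have eYH := cmul_mul ΔA (Yf p) (Hf p) (Tif p) (Tf p) (Tif p) (Tf p)
      (Yf_mul p) (Hf_mul p) f g
    have eYT := cmul_mul ΔA (Yf p) (Tf p) (Tif p) (Tf p) 0 (Tf p) (Yf_mul p) (Tf_mul p) f g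
    have eTY := cmul_mul ΔA (Tf p) (Yf p) 0 (Tf p) (Tif p) (Tf p) (Tf_mul p) (Yf_mul p) f g
    have eYTi := cmul_mul ΔA (Yf p) (Tif p) (Tif p) (Tf p) 0 (Tif p)
      (Yf_mul p) (Tif_mul p) f g
    have eTiY := cmul_mul ΔA (Tif p) (Yf p) 0 (Tif p) (Tif p) (Tf p)
      (Tif_mul p) (Yf_mul p) f g
    simp only [cmul_zero_left, cmul_zero_right, LinearMap.zero_apply, zero_mul, mul_zero,
      add_zero, zero_add] at eHY eYH eYT eTY eYTi eTiY
    simp only [LinearMap.add_apply, LinearMap.sub_apply, LinearMap.smul_apply,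
      smul_eq_mul, eHY, eYH, eYT, eTY, eYTi, eTiY, rTTi, rTiT]
    simp only [ryt, ryti, rht, rhti]
    ring
  · simp [cmul_one_apply, LinearMap.add_apply, LinearMap.sub_apply, LinearMap.smul_apply]
  · intro i
    obtain ⟨a0, a1, a2, a3⟩ := cmul_agen p ΔA hΔA (Hf p) (Yf p)
    obtain ⟨b0, b1, b2, b3⟩ := cmul_agen p ΔA hΔA (Yf p) (Hf p)
    obtain ⟨c0, c1, c2, c3⟩ := cmul_agen p ΔA hΔA (Yf p) (Tf p)
    obtain ⟨d0, d1, d2, d3⟩ := cmul_agen p ΔA hΔA (Tf p) (Yf p)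
    obtain ⟨f0, f1, f2, f3⟩ := cmul_agen p ΔA hΔA (Yf p) (Tif p)
    obtain ⟨g0, g1, g2, g3⟩ := cmul_agen p ΔA hΔA (Tif p) (Yf p)
    fin_cases i <;>
      simp [LinearMap.add_apply, LinearMap.sub_apply, LinearMap.smul_apply, smul_eq_mul,
        a0, a1, a2, a3, b0, b1, b2, b3, c0, c1, c2, c3, d0, d1, d2, d3,
        f0, f1, f2, f3, g0, g1, g2, g3] <;> ring_nf

theorem coassocA : CoassocP ΔA := by
  have heq : (Algebra.TensorProduct.map ΔA (AlgHom.id ℂ (SLj p))).comp ΔA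
      = ((Algebra.TensorProduct.assoc ℂ ℂ ℂ (SLj p) (SLj p) (SLj p)).symm.toAlgHom).comp
          ((Algebra.TensorProduct.map (AlgHom.id ℂ (SLj p)) ΔA).comp ΔA) := by
    obtain ⟨h0, h1, h2, h3⟩ := hΔA
    apply SLj.algHom_ext
    intro i
    fin_cases i <;>
      simp [h0, h1, h2, h3, Algebra.TensorProduct.map_tmul, TensorProduct.add_tmul,
        TensorProduct.tmul_add, Algebra.TensorProduct.assoc_symm_tmul] <;>
      abel
  intro f
  have := DFunLike.congr_fun heq f
  simpa using this

theorem counitLA : CounitLP ΔA εA := by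
  have heq : ((Algebra.TensorProduct.lid ℂ (SLj p)).toAlgHom).comp
      ((Algebra.TensorProduct.map εA (AlgHom.id ℂ (SLj p))).comp ΔA)
      = AlgHom.id ℂ (SLj p) := by
    obtain ⟨h0, h1, h2, h3⟩ := hΔA
    obtain ⟨e0, e1, e2, e3⟩ := hεA
    apply SLj.algHom_ext
    intro i
    fin_cases i <;>
      simp [h0, h1, h2, h3, e0, e1, e2, e3, Algebra.TensorProduct.lid_tmul]
  intro f
  have := DFunLike.congr_fun heq f
  simpa using this

theorem counitRA : CounitRP ΔA εA := by
  have heq : ((Algebra.TensorProduct.rid ℂ ℂ (SLj p)).toAlgHom).comp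
      ((Algebra.TensorProduct.map (AlgHom.id ℂ (SLj p)) εA).comp ΔA)
      = AlgHom.id ℂ (SLj p) := by
    obtain ⟨h0, h1, h2, h3⟩ := hΔA
    obtain ⟨e0, e1, e2, e3⟩ := hεA
    apply SLj.algHom_ext
    intro i
    fin_cases i <;>
      simp [h0, h1, h2, h3, e0, e1, e2, e3, Algebra.TensorProduct.rid_tmul]
  intro f
  have := DFunLike.congr_fun heq f
  simpa using this

/-- The pairing, as an algebra homomorphism into the convolution algebra. -/
def Bhom : Uj p →ₐ[ℂ] ConvT ΔA εA (coassocA p ΔA εA hΔA hεA)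
    (counitLA p ΔA εA hΔA hεA) (counitRA p ΔA εA hΔA hεA) :=
  RingQuot.liftAlgHom ℂ ⟨FreeAlgebra.lift ℂ
    (![Hf p, Yf p, Tf p, Tif p] :
      Fin 4 → ConvT ΔA εA (coassocA p ΔA εA hΔA hεA) (counitLA p ΔA εA hΔA hεA)
        (counitRA p ΔA εA hΔA hεA)), by
    rintro x y ⟨⟩ <;>
      simp only [map_mul, map_sub, map_add, map_smul, map_one,
        FreeAlgebra.lift_ι_apply] <;>
      simp only [Matrix.cons_val_zero, Matrix.cons_val_one, Matrix.head_cons,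
        Matrix.cons_val_two, Matrix.cons_val_three, Matrix.tail_cons, Matrix.head_fin_const]
    · exact rel_TTi p ΔA εA hΔA hεA
    · exact rel_TiT p ΔA εA hΔA hεA
    · exact rel_ht p ΔA εA hΔA hεA
    · exact rel_yt p ΔA εA hΔA hεA
    · exact rel_hy p ΔA εA hΔA hεA⟩

/-- The pairing as a linear map into the dual. -/
def Bd : Uj p →ₗ[ℂ] Module.Dual ℂ (SLj p) := (Bhom p ΔA εA hΔA hεA).toLinearMap

theorem Bhom_ugen : ∀ i, Bhom p ΔA εA hΔA hεA (ugen p i)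
    = (![Hf p, Yf p, Tf p, Tif p] :
        Fin 4 → ConvT ΔA εA (coassocA p ΔA εA hΔA hεA) (counitLA p ΔA εA hΔA hεA)
          (counitRA p ΔA εA hΔA hεA)) i := fun i => by
  rw [Bhom, ugen, RingQuot.liftAlgHom_mkAlgHom_apply, FreeAlgebra.lift_ι_apply]

theorem Bd_ugen0 : Bd p ΔA εA hΔA hεA (ugen p 0) = Hf p := Bhom_ugen p ΔA εA hΔA hεA 0
theorem Bd_ugen1 : Bd p ΔA εA hΔA hεA (ugen p 1) = Yf p := Bhom_ugen p ΔA εA hΔA hεA 1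
theorem Bd_ugen2 : Bd p ΔA εA hΔA hεA (ugen p 2) = Tf p := Bhom_ugen p ΔA εA hΔA hεA 2
theorem Bd_ugen3 : Bd p ΔA εA hΔA hεA (ugen p 3) = Tif p := Bhom_ugen p ΔA εA hΔA hεA 3

theorem Bd_mul (x y : Uj p) :
    Bd p ΔA εA hΔA hεA (x * y)
      = cmul ΔA (Bd p ΔA εA hΔA hεA x) (Bd p ΔA εA hΔA hεA y) := by
  show ((Bhom p ΔA εA hΔA hεA (x * y) :
    ConvT ΔA εA (coassocA p ΔA εA hΔA hεA) (counitLA p ΔA εA hΔA hεA)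
      (counitRA p ΔA εA hΔA hεA)) : Module.Dual ℂ (SLj p)) = _
  rw [map_mul]
  rfl

theorem Bd_one : Bd p ΔA εA hΔA hεA 1 = εA.toLinearMap := by
  show ((Bhom p ΔA εA hΔA hεA (1 : Uj p) :
    ConvT ΔA εA (coassocA p ΔA εA hΔA hεA) (counitLA p ΔA εA hΔA hεA)
      (counitRA p ΔA εA hΔA hεA)) : Module.Dual ℂ (SLj p)) = _
  rw [map_one]
  rfl

theorem Bd_algebraMap (c : ℂ) :
    Bd p ΔA εA hΔA hεA (algebraMap ℂ (Uj p) c) = c • εA.toLinearMap := by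
  rw [Algebra.algebraMap_eq_smul_one, map_smul, Bd_one]

/-- Axiom 1 of the pairing: `⟨xy, f⟩ = ⟨x ⊗ y, Δ f⟩`. -/
theorem Bd_mul_apply (x y : Uj p) (f : SLj p) :
    Bd p ΔA εA hΔA hεA (x * y) f
      = TensorProduct.dualDistrib ℂ (SLj p) (SLj p)
          (Bd p ΔA εA hΔA hεA x ⊗ₜ[ℂ] Bd p ΔA εA hΔA hεA y) (ΔA f) := by
  rw [Bd_mul, cmul_apply]

/-- Claim 3: rearrangement of a fourfold pairing. -/
theorem pair_four (x₁ x₂ y₁ y₂ : Uj p) (u w : SLj p ⊗[ℂ] SLj p) :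
    TensorProduct.dualDistrib ℂ (SLj p) (SLj p)
        (Bd p ΔA εA hΔA hεA x₁ ⊗ₜ[ℂ] Bd p ΔA εA hΔA hεA y₁) u
      * TensorProduct.dualDistrib ℂ (SLj p) (SLj p)
        (Bd p ΔA εA hΔA hεA x₂ ⊗ₜ[ℂ] Bd p ΔA εA hΔA hεA y₂) w
      = TensorProduct.dualDistrib ℂ (SLj p ⊗[ℂ] SLj p) (SLj p ⊗[ℂ] SLj p)
          ((pair2 (Bd p ΔA εA hΔA hεA) (x₁ ⊗ₜ[ℂ] x₂))
            ⊗ₜ[ℂ] (pair2 (Bd p ΔA εA hΔA hεA) (y₁ ⊗ₜ[ℂ] y₂)))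
          ((TensorProduct.tensorTensorTensorComm ℂ (SLj p) (SLj p) (SLj p) (SLj p)
              :  ((SLj p ⊗[ℂ] SLj p) ⊗[ℂ] (SLj p ⊗[ℂ] SLj p)) →ₗ[ℂ]
                 ((SLj p ⊗[ℂ] SLj p) ⊗[ℂ] (SLj p ⊗[ℂ] SLj p)))
            (u ⊗ₜ[ℂ] w)) := by
  induction u with
  | zero => simp [TensorProduct.zero_tmul]
  | tmul a b =>
      induction w with
      | zero => simp [TensorProduct.tmul_zero]
      | tmul c d =>
          simp only [LinearEquiv.coe_coe, TensorProduct.tensorTensorTensorComm_tmul,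
            pair2_tmul, TensorProduct.dualDistrib_apply]
          ring
      | add w1 w2 h1 h2 =>
          simp only [TensorProduct.tmul_add, map_add, mul_add, h1, h2]
  | add u1 u2 h1 h2 =>
      simp only [TensorProduct.add_tmul, map_add, add_mul, h1, h2]

/-- Claim 2. -/
theorem pair_mulUU (X Y : Uj p ⊗[ℂ] Uj p) (f g : SLj p) :
    pair2 (Bd p ΔA εA hΔA hεA) (X * Y) (f ⊗ₜ[ℂ] g)
      = TensorProduct.dualDistrib ℂ (SLj p ⊗[ℂ] SLj p) (SLj p ⊗[ℂ] SLj p)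
          ((pair2 (Bd p ΔA εA hΔA hεA) X) ⊗ₜ[ℂ] (pair2 (Bd p ΔA εA hΔA hεA) Y))
          ((TensorProduct.tensorTensorTensorComm ℂ (SLj p) (SLj p) (SLj p) (SLj p)
              :  ((SLj p ⊗[ℂ] SLj p) ⊗[ℂ] (SLj p ⊗[ℂ] SLj p)) →ₗ[ℂ]
                 ((SLj p ⊗[ℂ] SLj p) ⊗[ℂ] (SLj p ⊗[ℂ] SLj p)))
            (ΔA f ⊗ₜ[ℂ] ΔA g)) := by
  induction X with
  | zero => simp [TensorProduct.zero_tmul]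
  | tmul x₁ x₂ =>
      induction Y with
      | zero => simp [TensorProduct.tmul_zero]
      | tmul y₁ y₂ =>
          rw [Algebra.TensorProduct.tmul_mul_tmul, pair2_tmul,
            TensorProduct.dualDistrib_apply]
          rw [Bd_mul_apply p ΔA εA hΔA hεA x₁ y₁ f, Bd_mul_apply p ΔA εA hΔA hεA x₂ y₂ g]
          exact pair_four p ΔA εA hΔA hεA x₁ x₂ y₁ y₂ (ΔA f) (ΔA g)
      | add Y1 Y2 h1 h2 =>
          simp only [mul_add, map_add, LinearMap.add_apply, h1, h2,
            TensorProduct.tmul_add]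
  | add X1 X2 h1 h2 =>
      simp only [add_mul, map_add, LinearMap.add_apply, h1, h2,
        TensorProduct.add_tmul]

variable (ΔH : Uj p →ₐ[ℂ] (Uj p ⊗[ℂ] Uj p)) (hΔH : IsUComul p ΔH)

include hΔH

/-- Axiom 2 of the pairing, in tensor form. -/
theorem Bd_axiom2 : ∀ x : Uj p, ∀ v : SLj p ⊗[ℂ] SLj p,
    Bd p ΔA εA hΔA hεA x (LinearMap.mul' ℂ (SLj p) v)
      = pair2 (Bd p ΔA εA hΔA hεA) (ΔH x) v := by
  intro x
  induction x using Uj.induction with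
  | halg c =>
      intro v
      induction v with
      | zero => simp
      | tmul f g =>
          rw [LinearMap.mul'_apply, ΔH.commutes, Bd_algebraMap]
          have h1 : algebraMap ℂ (Uj p ⊗[ℂ] Uj p) c = c • ((1 : Uj p) ⊗ₜ[ℂ] (1 : Uj p)) := by
            rw [Algebra.algebraMap_eq_smul_one, Algebra.TensorProduct.one_def]
          rw [h1, map_smul, LinearMap.smul_apply, LinearMap.smul_apply, pair2_tmul,
            Bd_one, TensorProduct.dualDistrib_apply]
          simp only [AlgHom.toLinearMap_apply, map_mul, smul_eq_mul]
          try ring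
      | add v1 v2 h1 h2 => simp only [map_add, h1, h2]
  | hgen i =>
      intro v
      induction v with
      | zero => simp
      | tmul f g =>
          obtain ⟨hH0, hH1, hH2, hH3⟩ := hΔH
          rw [LinearMap.mul'_apply]
          fin_cases i
          · rw [show ugen p ⟨0, by norm_num⟩ = ugen p 0 from rfl, hH0, Bd_ugen0,
              map_add, LinearMap.add_apply, pair2_tmul, pair2_tmul,
              Bd_ugen0, Bd_ugen2, Bd_ugen3]
            simp only [TensorProduct.dualDistrib_apply]
            exact Hf_mul p f g
          · rw [show ugen p ⟨1, by norm_num⟩ = ugen p 1 from rfl, hH1, Bd_ugen1,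
              map_add, LinearMap.add_apply, pair2_tmul, pair2_tmul,
              Bd_ugen1, Bd_ugen2, Bd_ugen3]
            simp only [TensorProduct.dualDistrib_apply]
            exact Yf_mul p f g
          · rw [show ugen p ⟨2, by norm_num⟩ = ugen p 2 from rfl, hH2, Bd_ugen2,
              pair2_tmul, Bd_ugen2]
            simp only [TensorProduct.dualDistrib_apply]
            have h := Tf_mul p f g
            rw [LinearMap.zero_apply, zero_mul, add_zero] at h
            exact h
          · rw [show ugen p ⟨3, by norm_num⟩ = ugen p 3 from rfl, hH3, Bd_ugen3,
              pair2_tmul, Bd_ugen3]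
            simp only [TensorProduct.dualDistrib_apply]
            have h := Tif_mul p f g
            rw [LinearMap.zero_apply, zero_mul, add_zero] at h
            exact h
      | add v1 v2 h1 h2 => simp only [map_add, h1, h2]
  | hmul x y hx hy =>
      intro v
      induction v with
      | zero => simp
      | tmul f g =>
          rw [LinearMap.mul'_apply]
          have claim1 : ∀ u w : SLj p ⊗[ℂ] SLj p,
              TensorProduct.dualDistrib ℂ (SLj p) (SLj p)
                  (Bd p ΔA εA hΔA hεA x ⊗ₜ[ℂ] Bd p ΔA εA hΔA hεA y) (u * w)
                = TensorProduct.dualDistrib ℂ (SLj p ⊗[ℂ] SLj p) (SLj p ⊗[ℂ] SLj p)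
                    ((pair2 (Bd p ΔA εA hΔA hεA) (ΔH x))
                      ⊗ₜ[ℂ] (pair2 (Bd p ΔA εA hΔA hεA) (ΔH y)))
                    ((TensorProduct.tensorTensorTensorComm ℂ (SLj p) (SLj p) (SLj p) (SLj p)
                        :  ((SLj p ⊗[ℂ] SLj p) ⊗[ℂ] (SLj p ⊗[ℂ] SLj p)) →ₗ[ℂ]
                           ((SLj p ⊗[ℂ] SLj p) ⊗[ℂ] (SLj p ⊗[ℂ] SLj p)))
                      (u ⊗ₜ[ℂ] w)) := by
            intro u w
            induction u with
            | zero => simp [TensorProduct.zero_tmul]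
            | tmul a b =>
                induction w with
                | zero => simp [TensorProduct.tmul_zero]
                | tmul c d =>
                    rw [Algebra.TensorProduct.tmul_mul_tmul,
                      TensorProduct.dualDistrib_apply]
                    simp only [LinearEquiv.coe_coe,
                      TensorProduct.tensorTensorTensorComm_tmul,
                      TensorProduct.dualDistrib_apply]
                    have hxa := hx (a ⊗ₜ[ℂ] c)
                    have hyb := hy (b ⊗ₜ[ℂ] d)
                    rw [LinearMap.mul'_apply] at hxa hyb
                    rw [hxa, hyb]
                | add w1 w2 h1 h2 =>
                    simp only [mul_add, map_add, TensorProduct.tmul_add, h1, h2]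
            | add u1 u2 h1 h2 =>
                simp only [add_mul, map_add, TensorProduct.add_tmul, h1, h2]
          rw [Bd_mul_apply p ΔA εA hΔA hεA x y (f * g), map_mul ΔA,
            claim1 (ΔA f) (ΔA g), map_mul ΔH]
          exact (pair_mulUU p ΔA εA hΔA hεA (ΔH x) (ΔH y) f g).symm
      | add v1 v2 h1 h2 => simp only [map_add, h1, h2]
  | hadd x y hx hy =>
      intro v
      simp only [map_add, LinearMap.add_apply, hx v, hy v]

end Rels

/-- There is a unique dual pairing of Hopf algebras between `U_p^{(j)}(sl2)` and
`SL_p^{(j)}(2,ℂ)` with the prescribed values on the generators. -/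
theorem jordanian_pairing_exists_unique (p : ℂ)
    (ΔH : Uj p →ₐ[ℂ] (Uj p ⊗[ℂ] Uj p)) (εH : Uj p →ₐ[ℂ] ℂ)
    (ΔA : SLj p →ₐ[ℂ] (SLj p ⊗[ℂ] SLj p)) (εA : SLj p →ₐ[ℂ] ℂ)
    (hΔH : IsUComul p ΔH) (hεH : IsUCounit p εH)
    (hΔA : IsAComul p ΔA) (hεA : IsACounit p εA) :
    ∃! B : Uj p →ₗ[ℂ] Module.Dual ℂ (SLj p),
      IsDualPairing B ΔH εH ΔA εA ∧
      (∀ i j : Fin 4, B (ugen p i) (agen p j) = vals p i j) := by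
  have hax1 : ∀ (x y : Uj p) (f : SLj p),
      Bd p ΔA εA hΔA hεA (x * y) f
        = pair2 (Bd p ΔA εA hΔA hεA) (x ⊗ₜ[ℂ] y) (ΔA f) := by
    intro x y f
    rw [Bd_mul_apply p ΔA εA hΔA hεA, pair2_tmul]
  have hax2 : ∀ (x : Uj p) (f g : SLj p),
      Bd p ΔA εA hΔA hεA x (f * g)
        = pair2 (Bd p ΔA εA hΔA hεA) (ΔH x) (f ⊗ₜ[ℂ] g) := by
    intro x f g
    have h := Bd_axiom2 p ΔA εA hΔA hεA ΔH hΔH x (f ⊗ₜ[ℂ] g)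
    rwa [LinearMap.mul'_apply] at h
  have hax3 : ∀ f, Bd p ΔA εA hΔA hεA 1 f = εA f := fun f => by
    rw [Bd_one]; rfl
  have hax4 : ∀ x, Bd p ΔA εA hΔA hεA x 1 = εH x := by
    intro x
    induction x using Uj.induction with
    | halg c =>
        rw [Bd_algebraMap p ΔA εA hΔA hεA c, AlgHom.commutes]
        simp [AlgHom.toLinearMap_apply]
    | hgen i =>
        obtain ⟨e0, e1, e2, e3⟩ := hεH
        fin_cases i
        · rw [show ugen p ⟨0, by norm_num⟩ = ugen p 0 from rfl, Bd_ugen0, e0, Hf_one]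
        · rw [show ugen p ⟨1, by norm_num⟩ = ugen p 1 from rfl, Bd_ugen1, e1, Yf_one]
        · rw [show ugen p ⟨2, by norm_num⟩ = ugen p 2 from rfl, Bd_ugen2, e2, Tf_one]
        · rw [show ugen p ⟨3, by norm_num⟩ = ugen p 3 from rfl, Bd_ugen3, e3, Tif_one]
    | hmul x y hx hy =>
        rw [Bd_mul p ΔA εA hΔA hεA x y, cmul_one_apply, hx, hy, map_mul]
    | hadd x y hx hy =>
        rw [map_add, LinearMap.add_apply, hx, hy, map_add]
  have hvals : ∀ i j, Bd p ΔA εA hΔA hεA (ugen p i) (agen p j) = vals p i j := by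
    intro i j
    fin_cases i
    · rw [show ugen p ⟨0, by norm_num⟩ = ugen p 0 from rfl, Bd_ugen0]
      fin_cases j <;> simp [vals, Matrix.vecHead, Matrix.vecTail]
    · rw [show ugen p ⟨1, by norm_num⟩ = ugen p 1 from rfl, Bd_ugen1]
      fin_cases j <;> simp [vals, Matrix.vecHead, Matrix.vecTail]
    · rw [show ugen p ⟨2, by norm_num⟩ = ugen p 2 from rfl, Bd_ugen2]
      fin_cases j <;> simp [vals, Matrix.vecHead, Matrix.vecTail]
    · rw [show ugen p ⟨3, by norm_num⟩ = ugen p 3 from rfl, Bd_ugen3]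
      fin_cases j <;> simp [vals, Matrix.vecHead, Matrix.vecTail]
  refine ⟨Bd p ΔA εA hΔA hεA, ⟨⟨hax1, hax2, hax3, hax4⟩, hvals⟩, ?_⟩
  rintro B' ⟨⟨ax1', ax2', ax3', ax4'⟩, vals'⟩
  obtain ⟨hH0, hH1, hH2, hH3⟩ := hΔH
  have hgenEq : ∀ f : SLj p, ∀ i, B' (ugen p i) f = Bd p ΔA εA hΔA hεA (ugen p i) f := by
    intro f
    induction f using SLj.induction with
    | halg c =>
        intro i
        rw [Algebra.algebraMap_eq_smul_one, map_smul, map_smul, ax4' (ugen p i),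
          hax4 (ugen p i)]
    | hgen j => intro i; rw [vals' i j, hvals i j]
    | hmul f g hf hg =>
        intro i
        rw [ax2' (ugen p i) f g, hax2 (ugen p i) f g]
        fin_cases i
        · rw [show ugen p ⟨0, by norm_num⟩ = ugen p 0 from rfl, hH0]
          simp only [map_add, LinearMap.add_apply, pair2_tmul,
            TensorProduct.dualDistrib_apply, hf, hg]
        · rw [show ugen p ⟨1, by norm_num⟩ = ugen p 1 from rfl, hH1]
          simp only [map_add, LinearMap.add_apply, pair2_tmul,
            TensorProduct.dualDistrib_apply, hf, hg]
        · rw [show ugen p ⟨2, by norm_num⟩ = ugen p 2 from rfl, hH2]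
          simp only [pair2_tmul, TensorProduct.dualDistrib_apply, hf, hg]
        · rw [show ugen p ⟨3, by norm_num⟩ = ugen p 3 from rfl, hH3]
          simp only [pair2_tmul, TensorProduct.dualDistrib_apply, hf, hg]
    | hadd f g hf hg =>
        intro i
        rw [map_add, map_add, hf i, hg i]
  have hfin : ∀ x, B' x = Bd p ΔA εA hΔA hεA x := by
    intro x
    induction x using Uj.induction with
    | halg c =>
        ext f
        rw [Algebra.algebraMap_eq_smul_one, map_smul, map_smul, LinearMap.smul_apply,
          LinearMap.smul_apply, ax3' f, hax3 f]
    | hgen i => ext f; exact hgenEq f i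
    | hmul x y hx hy =>
        ext f
        rw [ax1' x y f, hax1 x y f, pair2_tmul, pair2_tmul, hx, hy]
    | hadd x y hx hy => rw [map_add, map_add, hx, hy]
  exact LinearMap.ext fun x => hfin x
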